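/- Let n ≥ 1, α ∈ [0,n], and let g be a locally integrable function on ℝⁿ. Let x ∈ ℝⁿ, R > 0, λ > 0 and a > 3^{n−α}. Suppose there exists ξ ∈ B_R(x) with M_α g(ξ) ≤ λ. Then {y ∈ B_R(x) : M_α g(y) > aλ} ⊆ {y ∈ B_R(x) : M_α^R g(y) > aλ}; in particular, ℒⁿ({M_α g > aλ} ∩ B_R(x)) ≤ ℒⁿ({M_α^R g > aλ} ∩ B_R(x)). -/

import Mathlib

open MeasureTheory

/-- The fractional maximal function `M_α φ(z) = sup_{ρ>0} ρ^α ⨍_{B_ρ(z)} |φ|`,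
valued in `ℝ≥0∞`. -/
noncomputable def fracMaximal (n : ℕ) (α : ℝ) (φ : EuclideanSpace ℝ (Fin n) → ℝ)
    (z : EuclideanSpace ℝ (Fin n)) : ENNReal :=
  ⨆ (ρ : ℝ) (_ : 0 < ρ), ENNReal.ofReal (ρ ^ α * ⨍ y in Metric.ball z ρ, |φ y|)

/-- The cut-off fractional maximal operator
`M_α^R φ(y) = sup_{0<ρ<R} ρ^α ⨍_{B_ρ(y)} |φ|`, valued in `ℝ≥0∞`. -/
noncomputable def fracMaximalCut (n : ℕ) (α R : ℝ) (φ : EuclideanSpace ℝ (Fin n) → ℝ)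
    (y : EuclideanSpace ℝ (Fin n)) : ENNReal :=
  ⨆ (ρ : ℝ) (_ : 0 < ρ) (_ : ρ < R), ENNReal.ofReal (ρ ^ α * ⨍ z in Metric.ball y ρ, |φ z|)

/-- Lemma 4.2 of the paper (cut-off lemma): if `M_α g(ξ) ≤ λ` for some
`ξ ∈ B_R(x)` and `a > 3^{n-α}`, then on `B_R(x)` the superlevel set
`{M_α g > aλ}` is contained in `{M_α^R g > aλ}`; in particular the corresponding
measure inequality holds. -/
theorem statement9 (n : ℕ) (hn : 1 ≤ n) (α : ℝ) (hα0 : 0 ≤ α) (hαn : α ≤ (n : ℝ))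
    (g : EuclideanSpace ℝ (Fin n) → ℝ) (hg : LocallyIntegrable g volume)
    (x : EuclideanSpace ℝ (Fin n)) (R lam a : ℝ) (hR : 0 < R) (hlam : 0 < lam)
    (ha : (3 : ℝ) ^ ((n : ℝ) - α) < a)
    (ξ : EuclideanSpace ℝ (Fin n)) (hξ : ξ ∈ Metric.ball x R)
    (hMξ : fracMaximal n α g ξ ≤ ENNReal.ofReal lam) :
    {y ∈ Metric.ball x R | ENNReal.ofReal (a * lam) < fracMaximal n α g y} ⊆
        {y ∈ Metric.ball x R | ENNReal.ofReal (a * lam) < fracMaximalCut n α R g y} ∧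
      volume ({y | ENNReal.ofReal (a * lam) < fracMaximal n α g y} ∩ Metric.ball x R) ≤
        volume ({y | ENNReal.ofReal (a * lam) < fracMaximalCut n α R g y} ∩
          Metric.ball x R) := by
  have h3pos : (0:ℝ) < (3:ℝ) ^ ((n : ℝ) - α) := Real.rpow_pos_of_pos (by norm_num) _
  have hapos : 0 < a := h3pos.trans ha
  have halam : 0 ≤ a * lam := by positivity
  have hsub : {y ∈ Metric.ball x R | ENNReal.ofReal (a * lam) < fracMaximal n α g y} ⊆
      {y ∈ Metric.ball x R | ENNReal.ofReal (a * lam) < fracMaximalCut n α R g y} := by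
    rintro y ⟨hy, hlt⟩
    refine ⟨hy, ?_⟩
    rw [fracMaximal, lt_iSup_iff] at hlt
    obtain ⟨ρ, hlt⟩ := hlt
    rw [lt_iSup_iff] at hlt
    obtain ⟨hρ, hlt⟩ := hlt
    have hρR : ρ < R := by
      by_contra hcon
      push_neg at hcon
      -- ρ ≥ R; derive a contradiction via the comparison with the ball around ξ
      set ρ3 := 3 * ρ with hρ3def
      have hρ3 : 0 < ρ3 := by positivity
      have hball : Metric.ball y ρ ⊆ Metric.ball ξ ρ3 := by
        intro z hz
        rw [Metric.mem_ball] at hz ⊢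
        have hyx : dist y x < R := Metric.mem_ball.mp hy
        have hξx : dist ξ x < R := Metric.mem_ball.mp hξ
        have h1 : dist y ξ ≤ dist y x + dist x ξ := dist_triangle _ _ _
        rw [dist_comm x ξ] at h1
        have h2 : dist z ξ ≤ dist z y + dist y ξ := dist_triangle _ _ _
        have : dist z ξ < ρ + 2 * R := by linarith
        have : dist z ξ < ρ + 2 * ρ := by linarith
        linarith
      have hIntBig : IntegrableOn (fun z => |g z|) (Metric.ball ξ ρ3) volume :=
        ((hg.integrableOn_isCompact (isCompact_closedBall ξ ρ3)).mono_set
          Metric.ball_subset_closedBall).abs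
      have hI : ∫ z in Metric.ball y ρ, |g z| ≤ ∫ z in Metric.ball ξ ρ3, |g z| :=
        setIntegral_mono_set hIntBig (Filter.Eventually.of_forall fun z => abs_nonneg _)
          (HasSubset.Subset.eventuallyLE hball)
      have hI1 : 0 ≤ ∫ z in Metric.ball y ρ, |g z| :=
        integral_nonneg fun z => abs_nonneg _
      -- volumes
      have hfin : Module.finrank ℝ (EuclideanSpace ℝ (Fin n)) = n := finrank_euclideanSpace_fin
      set c : ℝ := (volume (Metric.ball (0 : EuclideanSpace ℝ (Fin n)) 1)).toReal with hcdef
      have hcpos : 0 < c := by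
        rw [hcdef]
        refine ENNReal.toReal_pos (ne_of_gt (Metric.measure_ball_pos _ _ (by norm_num))) ?_
        exact (Metric.isBounded_ball.measure_lt_top).ne
      have hv1 : (volume (Metric.ball y ρ)).toReal = ρ ^ n * c := by
        rw [Measure.addHaar_ball_of_pos volume y hρ, hfin, ENNReal.toReal_mul,
          ENNReal.toReal_ofReal (by positivity)]
      have hv2 : (volume (Metric.ball ξ ρ3)).toReal = (3:ℝ) ^ n * ρ ^ n * c := by
        rw [Measure.addHaar_ball_of_pos volume ξ hρ3, hfin, ENNReal.toReal_mul,
          ENNReal.toReal_ofReal (by positivity), hρ3def, mul_pow]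
      -- averages
      set I₁ : ℝ := ∫ z in Metric.ball y ρ, |g z| with hI₁
      set I₂ : ℝ := ∫ z in Metric.ball ξ ρ3, |g z| with hI₂
      have hA : (⨍ z in Metric.ball y ρ, |g z|) = (ρ ^ n * c)⁻¹ * I₁ := by
        rw [setAverage_eq, measureReal_def, hv1]; simp [smul_eq_mul]; exact Or.inl rfl
      have hB : (⨍ z in Metric.ball ξ ρ3, |g z|) = ((3:ℝ) ^ n * ρ ^ n * c)⁻¹ * I₂ := by
        rw [setAverage_eq, measureReal_def, hv2]; simp [smul_eq_mul]; exact Or.inl rfl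
      -- the term at ρ3 centred at ξ is at most lam
      have hBle : ρ3 ^ α * ⨍ z in Metric.ball ξ ρ3, |g z| ≤ lam := by
        have hterm : ENNReal.ofReal (ρ3 ^ α * ⨍ z in Metric.ball ξ ρ3, |g z|) ≤
            ENNReal.ofReal lam := by
          refine le_trans ?_ hMξ
          rw [fracMaximal]
          exact le_iSup_of_le ρ3 (le_iSup_of_le hρ3 le_rfl)
        exact (ENNReal.ofReal_le_ofReal_iff hlam.le).mp hterm
      -- the key pointwise estimate
      have hpow : ρ3 ^ α = (3:ℝ) ^ α * ρ ^ α := by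
        rw [hρ3def, Real.mul_rpow (by norm_num) hρ.le]
      have h3n : (3:ℝ) ^ ((n:ℝ) - α) * (3:ℝ) ^ α = (3:ℝ) ^ n := by
        rw [← Real.rpow_add (by norm_num), sub_add_cancel, Real.rpow_natCast]
      have hkey : ρ ^ α * ⨍ z in Metric.ball y ρ, |g z| ≤
          (3:ℝ) ^ ((n:ℝ) - α) * (ρ3 ^ α * ⨍ z in Metric.ball ξ ρ3, |g z|) := by
        rw [hA, hB, hpow]
        have h3npos : (0:ℝ) < (3:ℝ) ^ n := by positivity
        have e : (3:ℝ) ^ ((n:ℝ) - α) * ((3:ℝ) ^ α * ρ ^ α *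
            (((3:ℝ) ^ n * ρ ^ n * c)⁻¹ * I₂)) = ρ ^ α * ((ρ ^ n * c)⁻¹ * I₂) := by
          rw [mul_inv, mul_inv]
          field_simp
          rw [← h3n]
        rw [e]
        have hρα : (0:ℝ) < ρ ^ α := Real.rpow_pos_of_pos hρ _
        have : (ρ ^ n * c)⁻¹ * I₁ ≤ (ρ ^ n * c)⁻¹ * I₂ := by
          apply mul_le_mul_of_nonneg_left hI
          positivity
        exact mul_le_mul_of_nonneg_left this hρα.le
      -- convert the ENNReal inequality at ρ to a real one and contradict
      have hAnn : 0 ≤ ρ ^ α * ⨍ z in Metric.ball y ρ, |g z| := by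
        rw [hA]
        have : (0:ℝ) ≤ (ρ ^ n * c)⁻¹ * I₁ := by positivity
        positivity
      have hreal : a * lam < ρ ^ α * ⨍ z in Metric.ball y ρ, |g z| :=
        (ENNReal.ofReal_lt_ofReal_iff_of_nonneg halam).mp hlt
      have hBnn : 0 ≤ ρ3 ^ α * ⨍ z in Metric.ball ξ ρ3, |g z| := by
        rw [hB]
        have : (0:ℝ) ≤ ((3:ℝ) ^ n * ρ ^ n * c)⁻¹ * I₂ := by positivity
        positivity
      have hfinal : ρ ^ α * ⨍ z in Metric.ball y ρ, |g z| ≤ (3:ℝ) ^ ((n:ℝ) - α) * lam :=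
        hkey.trans (mul_le_mul_of_nonneg_left hBle h3pos.le)
      have : (3:ℝ) ^ ((n:ℝ) - α) * lam < a * lam := mul_lt_mul_of_pos_right ha hlam
      linarith
    -- now ρ < R, so the same term appears in the cut-off maximal function
    refine hlt.trans_le ?_
    rw [fracMaximalCut]
    exact le_iSup_of_le ρ (le_iSup_of_le hρ (le_iSup_of_le hρR le_rfl))
  refine ⟨hsub, ?_⟩
  apply measure_mono
  rintro y ⟨h1, h2⟩
  exact ⟨(hsub ⟨h2, h1⟩).2, h2⟩
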